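/- Let (T, ℓ) be a weighted tree and let i_1, …, i_m be m ≥ 2 distinct leaves of T. Then there exists an m-cycle α in the symmetric group on {1,…,m} such that 2 · d_{i_1…i_m}(T, ℓ) = d_{i_1 i_{α(1)}}(T,ℓ) + d_{i_{α(1)} i_{α²(1)}}(T,ℓ) + … + d_{i_{α^{m-1}(1)} i_{α^m(1)}}(T,ℓ); that is, some cyclic ordering of the m leaves achieves total consecutive-distance exactly twice the m-dissimilarity. -/

import Mathlib

set_option linter.unusedSectionVars false
set_option maxHeartbeats 1000000


/-- The edge set of the unique path between two vertices of a tree. -/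
noncomputable def treePathEdges {V : Type*} [DecidableEq V] (G : SimpleGraph V)
    (hG : G.IsTree) (i j : V) : Finset (Sym2 V) :=
  ((hG.existsUnique_path i j).choose).edges.toFinset

/-- The tree distance between two vertices: the total weight of the unique path. -/
noncomputable def treeDist {V : Type*} [DecidableEq V] (G : SimpleGraph V)
    (hG : G.IsTree) (ℓ : Sym2 V → ℝ) (i j : V) : ℝ :=
  ∑ e ∈ treePathEdges G hG i j, ℓ e

/-- The combinatorial convex hull of a finite set of vertices of a tree: the union of
the edge sets of the paths between all pairs of members. -/
noncomputable def hullEdges {V : Type*} [DecidableEq V] (G : SimpleGraph V)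
    (hG : G.IsTree) (A : Finset V) : Finset (Sym2 V) :=
  A.biUnion fun i => A.biUnion fun j => treePathEdges G hG i j

/-- The dissimilarity of a finite set of vertices of a weighted tree: the total weight
of its combinatorial convex hull. -/
noncomputable def dissim {V : Type*} [DecidableEq V] (G : SimpleGraph V)
    (hG : G.IsTree) (ℓ : Sym2 V → ℝ) (A : Finset V) : ℝ :=
  ∑ e ∈ hullEdges G hG A, ℓ e

/-- A vertex of a graph is a leaf if it has exactly one neighbor. -/
def IsLeaf {V : Type*} (G : SimpleGraph V) (v : V) : Prop :=
  (G.neighborSet v).ncard = 1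

section Paths
variable {V : Type*} [DecidableEq V] {G : SimpleGraph V} (hG : G.IsTree)

/-- The chosen path. -/
noncomputable def pathBtw (u v : V) : G.Walk u v := (hG.existsUnique_path u v).choose

lemma pathBtw_isPath (u v : V) : (pathBtw hG u v).IsPath :=
  (hG.existsUnique_path u v).choose_spec.1

lemma pathBtw_unique {u v : V} (q : G.Walk u v) (hq : q.IsPath) : q = pathBtw hG u v :=
  ((hG.existsUnique_path u v).choose_spec.2 q hq)

lemma treePathEdges_def (u v : V) :
    treePathEdges G hG u v = (pathBtw hG u v).edges.toFinset := rfl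

lemma treePathEdges_eq {u v : V} (q : G.Walk u v) (hq : q.IsPath) :
    treePathEdges G hG u v = q.edges.toFinset := by
  rw [treePathEdges_def, ← pathBtw_unique hG q hq]

lemma treePathEdges_self (u : V) : treePathEdges G hG u u = ∅ := by
  rw [treePathEdges_eq hG (SimpleGraph.Walk.nil) SimpleGraph.Walk.IsPath.nil]
  simp

lemma treePathEdges_symm (u v : V) : treePathEdges G hG u v = treePathEdges G hG v u := by
  rw [treePathEdges_eq hG ((pathBtw hG v u).reverse) ((pathBtw_isPath hG v u).reverse),
    treePathEdges_def]
  simp [SimpleGraph.Walk.edges_reverse]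

lemma treePathEdges_adj {x y : V} (h : G.Adj x y) :
    treePathEdges G hG x y = {s(x, y)} := by
  rw [treePathEdges_eq hG (SimpleGraph.Walk.cons h SimpleGraph.Walk.nil)
    (SimpleGraph.Walk.IsPath.nil.cons (by simp [h.ne]))]
  simp

lemma mem_edgeSet_of_mem_treePathEdges {u v : V} {e : Sym2 V}
    (he : e ∈ treePathEdges G hG u v) : e ∈ G.edgeSet := by
  rw [treePathEdges_def, List.mem_toFinset] at he
  exact (pathBtw hG u v).edges_subset_edgeSet he

lemma mem_support_of_mem_treePathEdges {u v x y : V}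
    (he : s(x, y) ∈ treePathEdges G hG u v) : x ∈ (pathBtw hG u v).support := by
  rw [treePathEdges_def, List.mem_toFinset] at he
  exact SimpleGraph.Walk.fst_mem_support_of_mem_edges _ he

/-- prefix property -/
lemma treePathEdges_prefix {u v x : V} (hx : x ∈ (pathBtw hG u v).support) :
    (pathBtw hG u x).edges <+: (pathBtw hG u v).edges := by
  have h1 : pathBtw hG u x = (pathBtw hG u v).takeUntil x hx :=
    (pathBtw_unique hG _ ((pathBtw_isPath hG u v).takeUntil hx)).symm
  rw [h1]
  refine ⟨((pathBtw hG u v).dropUntil x hx).edges, ?_⟩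
  rw [← SimpleGraph.Walk.edges_append, SimpleGraph.Walk.take_spec]

lemma treePathEdges_subset {u v x : V} (hx : x ∈ (pathBtw hG u v).support) :
    treePathEdges G hG u x ⊆ treePathEdges G hG u v := by
  intro e he
  rw [treePathEdges_def, List.mem_toFinset] at he ⊢
  exact (treePathEdges_prefix hG hx).subset he

lemma treePathEdges_prefix_comparable {u v x y : V} (hx : x ∈ (pathBtw hG u v).support)
    (hy : y ∈ (pathBtw hG u v).support) :
    treePathEdges G hG u x ⊆ treePathEdges G hG u y ∨
      treePathEdges G hG u y ⊆ treePathEdges G hG u x := by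
  rcases List.prefix_or_prefix_of_prefix (treePathEdges_prefix hG hx)
    (treePathEdges_prefix hG hy) with h | h
  · left; intro e he; rw [treePathEdges_def, List.mem_toFinset] at he ⊢; exact h.subset he
  · right; intro e he; rw [treePathEdges_def, List.mem_toFinset] at he ⊢; exact h.subset he

lemma treePathEdges_step {u u' w : V} (h : G.Adj u u') :
    (treePathEdges G hG u w = insert s(u,u') (treePathEdges G hG u' w) ∧
        s(u,u') ∉ treePathEdges G hG u' w) ∨
    (treePathEdges G hG u' w = insert s(u,u') (treePathEdges G hG u w) ∧
        s(u,u') ∉ treePathEdges G hG u w) := by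
  set q := pathBtw hG u' w with hq
  by_cases hu : u ∈ q.support
  · right
    have hq₂ : (q.dropUntil u hu).IsPath := (pathBtw_isPath hG u' w).dropUntil hu
    have hPuw : treePathEdges G hG u w = (q.dropUntil u hu).edges.toFinset :=
      treePathEdges_eq hG _ hq₂
    have h1 : q.takeUntil u hu = SimpleGraph.Walk.cons h.symm SimpleGraph.Walk.nil := by
      rw [pathBtw_unique hG _ ((pathBtw_isPath hG u' w).takeUntil hu),
        pathBtw_unique hG (SimpleGraph.Walk.cons h.symm SimpleGraph.Walk.nil)
          (SimpleGraph.Walk.IsPath.nil.cons (by simp [h.ne']))]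
    have h2 : q.edges = s(u', u) :: (q.dropUntil u hu).edges := by
      conv_lhs => rw [← SimpleGraph.Walk.take_spec q hu]
      rw [SimpleGraph.Walk.edges_append, h1]
      simp
    have hnd : q.edges.Nodup := (pathBtw_isPath hG u' w).edges_nodup
    rw [h2] at hnd
    have hswap : s(u', u) = s(u, u') := Sym2.eq_swap
    constructor
    · rw [treePathEdges_def, ← hq, h2, hPuw]
      simp [hswap]
    · rw [hPuw, List.mem_toFinset, ← hswap]
      exact (List.nodup_cons.mp hnd).1
  · left
    have hcons : (SimpleGraph.Walk.cons h q).IsPath :=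
      (pathBtw_isPath hG u' w).cons hu
    have hPuw : treePathEdges G hG u w = (SimpleGraph.Walk.cons h q).edges.toFinset :=
      treePathEdges_eq hG _ hcons
    constructor
    · rw [hPuw, treePathEdges_def, ← hq]
      simp
    · rw [treePathEdges_def, ← hq, List.mem_toFinset]
      intro hmem
      exact hu (SimpleGraph.Walk.fst_mem_support_of_mem_edges q hmem)

lemma mem_flip_iff {u u' : V} (h : G.Adj u u') (w : V) (e : Sym2 V) :
    ((e ∈ treePathEdges G hG u w) ↔ (e ∈ treePathEdges G hG u' w)) ↔ e ≠ s(u,u') := by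
  rcases treePathEdges_step hG (w := w) h with ⟨h1, h2⟩ | ⟨h1, h2⟩ <;>
    by_cases he : e = s(u, u') <;>
    simp only [h1, Finset.mem_insert, he] <;> tauto

lemma parity_lemma (w : V) (e : Sym2 V) {u v : V} (p : G.Walk u v) :
    ((e ∈ treePathEdges G hG u w) ↔ (e ∈ treePathEdges G hG v w)) ↔
      (p.edges.count e % 2 = 0) := by
  induction p with
  | nil => simp
  | @cons a b c hadj p ih =>
    by_cases he : e = s(a, b)
    · have hflip : (e ∈ treePathEdges G hG a w) ↔ ¬(e ∈ treePathEdges G hG b w) := by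
        have := mem_flip_iff hG hadj w e
        rw [he] at this ⊢
        tauto
      have hcnt : (SimpleGraph.Walk.cons hadj p).edges.count e = p.edges.count e + 1 := by
        simp [SimpleGraph.Walk.edges_cons, he]
      rw [hcnt]
      constructor
      · intro hiff
        have : ¬((e ∈ treePathEdges G hG b w) ↔ (e ∈ treePathEdges G hG c w)) := by tauto
        rw [ih] at this
        omega
      · intro hp
        have : ¬(p.edges.count e % 2 = 0) := by omega
        rw [← ih] at this
        tauto
    · have hflip : (e ∈ treePathEdges G hG a w) ↔ (e ∈ treePathEdges G hG b w) :=
        (mem_flip_iff hG hadj w e).mpr he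
      have hcnt : (SimpleGraph.Walk.cons hadj p).edges.count e = p.edges.count e := by
        simp [SimpleGraph.Walk.edges_cons, List.count_cons, he, Ne.symm he]
      rw [hcnt, ← ih]
      tauto

/-- The cocycle / xor lemma. -/
lemma cocycle (u v w : V) (e : Sym2 V) :
    e ∈ treePathEdges G hG u v ↔
      ¬((e ∈ treePathEdges G hG u w) ↔ (e ∈ treePathEdges G hG v w)) := by
  have hp := parity_lemma hG w e (pathBtw hG u v)
  have hmem : e ∈ treePathEdges G hG u v ↔ e ∈ (pathBtw hG u v).edges := by
    rw [treePathEdges_def, List.mem_toFinset]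
  by_cases he : e ∈ (pathBtw hG u v).edges
  · have : (pathBtw hG u v).edges.count e = 1 :=
      List.count_eq_one_of_mem (pathBtw_isPath hG u v).edges_nodup he
    rw [this] at hp
    simp only [hmem, he, true_iff]
    intro hiff
    rw [hp] at hiff
    omega
  · have : (pathBtw hG u v).edges.count e = 0 := List.count_eq_zero.mpr he
    rw [this] at hp
    simp only [hmem, he, false_iff, not_not]
    exact hp.mpr rfl


lemma mem_support_snd_of_mem_treePathEdges {u v x y : V}
    (he : s(x, y) ∈ treePathEdges G hG u v) : y ∈ (pathBtw hG u v).support := by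
  rw [Sym2.eq_swap] at he
  exact mem_support_of_mem_treePathEdges hG he

lemma exists_orient {b w : V} {e : Sym2 V} (he : e ∈ treePathEdges G hG b w) :
    ∃ x y, e = s(x, y) ∧ G.Adj x y ∧ e ∉ treePathEdges G hG b x ∧
      e ∈ treePathEdges G hG b y := by
  obtain ⟨⟨x, y⟩, rfl⟩ := Quot.exists_rep e
  rw [show (Quot.mk (Sym2.Rel V) (x, y) : Sym2 V) = s(x, y) from rfl] at he ⊢
  have hadj : G.Adj x y := (SimpleGraph.mem_edgeSet G).mp (mem_edgeSet_of_mem_treePathEdges hG he)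
  have hxy : s(x, y) ∈ treePathEdges G hG x y := by
    rw [treePathEdges_adj hG hadj]; simp
  have hco := (cocycle hG x y b s(x, y)).mp hxy
  rw [treePathEdges_symm hG x b, treePathEdges_symm hG y b] at hco
  by_cases hbx : s(x, y) ∈ treePathEdges G hG b x
  · refine ⟨y, x, Sym2.eq_swap, hadj.symm, ?_, hbx⟩
    tauto
  · exact ⟨x, y, rfl, hadj, hbx, by tauto⟩

lemma insert_decomp {b x y : V} (hadj : G.Adj x y)
    (hbx : s(x, y) ∉ treePathEdges G hG b x) :
    treePathEdges G hG b y = insert s(x, y) (treePathEdges G hG b x) := by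
  ext g
  have hco := cocycle hG x y b g
  rw [treePathEdges_symm hG x b, treePathEdges_symm hG y b, treePathEdges_adj hG hadj,
    Finset.mem_singleton] at hco
  simp only [Finset.mem_insert]
  by_cases hg : g = s(x, y) <;> [skip; tauto]
  subst hg
  simp only [hbx, false_iff] at *
  tauto

lemma compare_lemma {b w : V} {e f : Sym2 V} (hew : e ∈ treePathEdges G hG b w)
    (hfw : f ∈ treePathEdges G hG b w) :
    (∀ u, e ∈ treePathEdges G hG b u → f ∈ treePathEdges G hG b u) ∨
    (∀ u, f ∈ treePathEdges G hG b u → e ∈ treePathEdges G hG b u) := by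
  by_cases hef : e = f
  · left; rw [hef]; exact fun _ h => h
  obtain ⟨x, y, he, hadj, hex, hey⟩ := exists_orient hG hew
  obtain ⟨x', y', hf, hadj', hfx, hfy⟩ := exists_orient hG hfw
  by_cases h1 : e ∈ treePathEdges G hG b x'
  · right
    intro u hfu
    have hx'u : x' ∈ (pathBtw hG b u).support := by
      rw [hf] at hfu
      exact mem_support_of_mem_treePathEdges hG hfu
    exact treePathEdges_subset hG hx'u h1
  by_cases h2 : f ∈ treePathEdges G hG b x
  · left
    intro u heu
    have hxu : x ∈ (pathBtw hG b u).support := by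
      rw [he] at heu
      exact mem_support_of_mem_treePathEdges hG heu
    exact treePathEdges_subset hG hxu h2
  · exfalso
    have hdy : treePathEdges G hG b y = insert e (treePathEdges G hG b x) := by
      rw [he] at hex ⊢
      exact insert_decomp hG hadj hex
    have hdy' : treePathEdges G hG b y' = insert f (treePathEdges G hG b x') := by
      rw [hf] at hfx ⊢
      exact insert_decomp hG hadj' hfx
    have hfny : f ∉ treePathEdges G hG b y := by
      rw [hdy]
      simp only [Finset.mem_insert]
      tauto
    have heny' : e ∉ treePathEdges G hG b y' := by
      rw [hdy']
      simp only [Finset.mem_insert]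
      tauto
    have hys : y ∈ (pathBtw hG b w).support := by
      rw [he] at hew
      exact mem_support_snd_of_mem_treePathEdges hG hew
    have hy's : y' ∈ (pathBtw hG b w).support := by
      rw [hf] at hfw
      exact mem_support_snd_of_mem_treePathEdges hG hfw
    rcases treePathEdges_prefix_comparable hG hys hy's with hc | hc
    · exact heny' (hc hey)
    · exact hfny (hc hfy)


end Paths

section Hull
variable {V : Type*} [DecidableEq V] {G : SimpleGraph V} (hG : G.IsTree)

lemma mem_hullEdges {A : Finset V} {e : Sym2 V} :
    e ∈ hullEdges G hG A ↔ ∃ u ∈ A, ∃ v ∈ A, e ∈ treePathEdges G hG u v := by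
  simp [hullEdges]

lemma treePathEdges_subset_hullEdges {A : Finset V} {u v : V} (hu : u ∈ A) (hv : v ∈ A) :
    treePathEdges G hG u v ⊆ hullEdges G hG A := by
  intro e he
  exact (mem_hullEdges hG).mpr ⟨u, hu, v, hv, he⟩

lemma exists_good {m : ℕ} (α : Equiv.Perm (Fin m)) (hc : α.IsCycle)
    (hs : α.support = Finset.univ) (j' : Fin m → V) (b : V) :
    ∃ a : Fin m, ∀ e ∈ hullEdges G hG (Finset.univ.image j'),
      ¬(e ∈ treePathEdges G hG b (j' a) ∧ e ∈ treePathEdges G hG b (j' (α a))) := by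
  by_contra hcon
  push_neg at hcon
  choose E hE h1 h2 using hcon
  set S : Fin m → Finset (Fin m) :=
    fun a => Finset.univ.filter (fun c => E a ∈ treePathEdges G hG b (j' c)) with hS
  have hne : (Finset.univ.image S).Nonempty := by
    obtain ⟨x, hx, -⟩ := hc
    exact ⟨S x, Finset.mem_image_of_mem S (Finset.mem_univ x)⟩
  obtain ⟨M, hMF, hmax⟩ := Finset.exists_max_image (Finset.univ.image S) Finset.card hne
  obtain ⟨a₁, -, hMa⟩ := Finset.mem_image.mp hMF
  have hina : ∀ a, a ∈ S a := by
    intro a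
    simp only [hS, Finset.mem_filter, Finset.mem_univ, true_and]
    exact h1 a
  have hinS : ∀ a c, c ∈ S a ↔ E a ∈ treePathEdges G hG b (j' c) := by
    intro a c
    simp only [hS, Finset.mem_filter, Finset.mem_univ, true_and]
  have hinv : ∀ a ∈ M, α a ∈ M := by
    intro a ha
    rw [← hMa] at ha ⊢
    have haM : E a₁ ∈ treePathEdges G hG b (j' a) := (hinS a₁ a).mp ha
    rcases compare_lemma hG haM (h1 a) with himp | himp
    · have hsub : S a₁ ⊆ S a := by
        intro c hc'
        rw [hinS] at hc' ⊢
        exact himp _ hc'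
      have heq : S a₁ = S a := by
        apply Finset.eq_of_subset_of_card_le hsub
        rw [hMa]
        exact hmax _ (Finset.mem_image_of_mem S (Finset.mem_univ a))
      rw [heq, hinS]
      exact h2 a
    · rw [hinS]
      exact himp _ (h2 a)
  have ha₁M : a₁ ∈ M := by rw [← hMa]; exact hina a₁
  have hall : ∀ c, c ∈ M := by
    intro c
    have hx : α a₁ ≠ a₁ := by
      rw [← Equiv.Perm.mem_support, hs]; exact Finset.mem_univ a₁
    have hy : α c ≠ c := by
      rw [← Equiv.Perm.mem_support, hs]; exact Finset.mem_univ c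
    obtain ⟨k, hk⟩ := hc.exists_pow_eq hx hy
    rw [← hk]
    clear hk hy
    induction k with
    | zero => simpa using ha₁M
    | succ k ih =>
      rw [pow_succ', Equiv.Perm.mul_apply]
      exact hinv _ ih
  obtain ⟨u, hu, v, hv, hpe⟩ := (mem_hullEdges hG).mp (hE a₁)
  have hco := (cocycle hG u v b (E a₁)).mp hpe
  rw [treePathEdges_symm hG u b, treePathEdges_symm hG v b] at hco
  have hmiss : E a₁ ∉ treePathEdges G hG b u ∨ E a₁ ∉ treePathEdges G hG b v := by tauto
  have hwit : ∃ w ∈ Finset.univ.image j', E a₁ ∉ treePathEdges G hG b w := by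
    rcases hmiss with h | h
    · exact ⟨u, hu, h⟩
    · exact ⟨v, hv, h⟩
  obtain ⟨w, hwA, hw⟩ := hwit
  obtain ⟨cw, -, rfl⟩ := Finset.mem_image.mp hwA
  have := hall cw
  rw [← hMa, hinS] at this
  exact hw this

end Hull


section Aux
variable {V : Type*} [DecidableEq V] {G : SimpleGraph V} (hG : G.IsTree)

lemma aux_counts (n : ℕ) (j : Fin (n+2) → V) (hj : Function.Injective j) :
    ∃ σ : Equiv.Perm (Fin (n+2)),
      ∀ e ∈ hullEdges G hG (Finset.univ.image j),
        (∑ c : Fin (n+2), if e ∈ treePathEdges G hG (j (σ c))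
            (j (σ (finRotate (n+2) c))) then (1:ℕ) else 0) = 2 := by
  induction n with
  | zero =>
    refine ⟨1, ?_⟩
    intro e he
    have h01 : e ∈ treePathEdges G hG (j 0) (j 1) := by
      obtain ⟨u, hu, v, hv, hpe⟩ := (mem_hullEdges hG).mp he
      obtain ⟨cu, -, rfl⟩ := Finset.mem_image.mp hu
      obtain ⟨cv, -, rfl⟩ := Finset.mem_image.mp hv
      have h2 : ∀ c : Fin 2, c = 0 ∨ c = 1 := by decide
      rcases h2 cu with rfl | rfl <;> rcases h2 cv with rfl | rfl
      · rw [treePathEdges_self] at hpe; exact absurd hpe (Finset.notMem_empty e)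
      · exact hpe
      · rw [treePathEdges_symm]; exact hpe
      · rw [treePathEdges_self] at hpe; exact absurd hpe (Finset.notMem_empty e)
    have hr0 : finRotate 2 0 = 1 := by decide
    have hr1 : finRotate 2 1 = 0 := by decide
    rw [Fin.sum_univ_two]
    simp only [Equiv.Perm.coe_one, id_eq, hr0, hr1]
    rw [if_pos h01, if_pos (by rw [treePathEdges_symm]; exact h01)]
  | succ n ih =>
    set b := j (Fin.last (n+2)) with hbdef
    set j₀ : Fin (n+2) → V := j ∘ Fin.castSucc with hj₀def
    have hj₀ : Function.Injective j₀ := hj.comp (Fin.castSucc_injective _)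
    obtain ⟨σ₀, hσ₀⟩ := ih j₀ hj₀
    set jh : Fin (n+2) → V := j₀ ∘ σ₀ with hjhdef
    set A₀ := Finset.univ.image j₀ with hA₀
    have himjh : Finset.univ.image jh = A₀ := by
      rw [hA₀]; ext x
      simp only [Finset.mem_image, Finset.mem_univ, true_and, hjhdef, Function.comp_apply]
      constructor
      · rintro ⟨c, rfl⟩; exact ⟨σ₀ c, rfl⟩
      · rintro ⟨c, rfl⟩; exact ⟨σ₀.symm c, by simp⟩
    have hcount0 : ∀ e ∈ hullEdges G hG A₀,
        (∑ c : Fin (n+2), if e ∈ treePathEdges G hG (jh c)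
            (jh (finRotate (n+2) c)) then (1:ℕ) else 0) = 2 := hσ₀
    obtain ⟨a, ha⟩ := exists_good hG (finRotate (n+2)) isCycle_finRotate
      support_finRotate jh b
    rw [himjh] at ha
    have hrota : finRotate (n+2) a = a + 1 := finRotate_succ_apply a
    rw [hrota] at ha
    set τ : Equiv.Perm (Fin (n+2)) := Equiv.addRight (a + 1) with hτdef
    set j₁ : Fin (n+2) → V := jh ∘ τ with hj₁def
    have hτlast : τ (Fin.last (n+1)) = a := by
      simp only [hτdef, Equiv.coe_addRight]
      rw [add_comm a 1, ← add_assoc, Fin.last_add_one, zero_add]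
    have hτ0 : τ 0 = a + 1 := by
      simp only [hτdef, Equiv.coe_addRight, zero_add]
    have hj₁last : j₁ (Fin.last (n+1)) = jh a := by
      rw [hj₁def, Function.comp_apply, hτlast]
    have hj₁0 : j₁ 0 = jh (a + 1) := by
      rw [hj₁def, Function.comp_apply, hτ0]
    have hcomm : ∀ c, finRotate (n+2) (τ c) = τ (finRotate (n+2) c) := by
      intro c
      simp only [hτdef, Equiv.coe_addRight, finRotate_succ_apply]
      abel
    have hcount1 : ∀ e ∈ hullEdges G hG A₀,
        (∑ c : Fin (n+2), if e ∈ treePathEdges G hG (j₁ c)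
            (j₁ (finRotate (n+2) c)) then (1:ℕ) else 0) = 2 := by
      intro e he
      refine Eq.trans ?_ (hcount0 e he)
      refine Fintype.sum_bijective τ τ.bijective _ _ (fun c => ?_)
      simp only [hj₁def, Function.comp_apply, hcomm c]
    have himj₁ : Finset.univ.image j₁ = A₀ := by
      rw [← himjh]; ext x
      simp only [Finset.mem_image, Finset.mem_univ, true_and, hj₁def, Function.comp_apply]
      constructor
      · rintro ⟨c, rfl⟩; exact ⟨τ c, rfl⟩
      · rintro ⟨c, rfl⟩; exact ⟨τ.symm c, by simp⟩
    set J : Fin (n+3) → V := Fin.snoc j₁ b with hJdef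
    have hJcast : ∀ d : Fin (n+2), J d.castSucc = j₁ d := by
      intro d; rw [hJdef]; exact Fin.snoc_castSucc _ _ _
    have hJlast : J (Fin.last (n+2)) = b := by
      rw [hJdef]; exact Fin.snoc_last _ _
    have himage : ∀ (g : Fin (n+3) → V), Finset.univ.image g =
        insert (g (Fin.last (n+2))) (Finset.univ.image (g ∘ Fin.castSucc)) := by
      intro g; ext x
      simp only [Finset.mem_image, Finset.mem_univ, true_and, Finset.mem_insert,
        Function.comp_apply]
      constructor
      · rintro ⟨c, rfl⟩
        rcases Fin.eq_castSucc_or_eq_last c with ⟨d, rfl⟩ | rfl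
        · exact Or.inr ⟨d, rfl⟩
        · exact Or.inl rfl
      · rintro (rfl | ⟨c, rfl⟩)
        · exact ⟨Fin.last (n+2), rfl⟩
        · exact ⟨c.castSucc, rfl⟩
    have hA' : Finset.univ.image j = insert b A₀ := by
      rw [himage j, ← hbdef, hA₀, hj₀def]
    have himJ : Finset.univ.image J = Finset.univ.image j := by
      rw [himage J, hJlast, hA']
      congr 1
      rw [← himj₁]
      congr 1
      funext d
      exact hJcast d
    have hbA₀ : b ∉ A₀ := by
      rw [hA₀]
      simp only [Finset.mem_image, Finset.mem_univ, true_and]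
      rintro ⟨c, hc⟩
      have : Fin.castSucc c = Fin.last (n+2) := hj hc
      exact absurd this (Fin.castSucc_lt_last c).ne
    have hj₁inj : Function.Injective j₁ :=
      (hj₀.comp σ₀.injective).comp τ.injective
    have hJinj : Function.Injective J := by
      intro c d hcd
      rcases Fin.eq_castSucc_or_eq_last c with ⟨c', rfl⟩ | rfl <;>
        rcases Fin.eq_castSucc_or_eq_last d with ⟨d', rfl⟩ | rfl
      · rw [hJcast, hJcast] at hcd
        rw [hj₁inj hcd]
      · rw [hJcast, hJlast] at hcd
        exact absurd (himj₁ ▸ Finset.mem_image_of_mem j₁ (Finset.mem_univ c') :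
          j₁ c' ∈ A₀) (hcd ▸ hbA₀)
      · rw [hJcast, hJlast] at hcd
        exact absurd (himj₁ ▸ Finset.mem_image_of_mem j₁ (Finset.mem_univ d') :
          j₁ d' ∈ A₀) (hcd.symm ▸ hbA₀)
      · rfl
    have hcs : ∀ d : Fin (n+2), d ≠ Fin.last (n+1) →
        (d.castSucc : Fin (n+3)) + 1 = (d+1).castSucc := by
      intro d hd
      have h1 : (d.castSucc : Fin (n+3)) ≠ Fin.last (n+2) := (Fin.castSucc_lt_last d).ne
      have h2 : d.val + 1 < n + 2 := by
        have := Fin.val_lt_last hd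
        omega
      apply Fin.ext
      rw [Fin.val_add_one, if_neg h1]
      simp only [Fin.coe_castSucc, Fin.val_add_one]
      rw [if_neg hd]
    -- the key counting fact for J
    have hnew : ∀ e ∈ hullEdges G hG (Finset.univ.image j),
        (∑ c : Fin (n+3), if e ∈ treePathEdges G hG (J c)
            (J (finRotate (n+3) c)) then (1:ℕ) else 0) = 2 := by
      intro e he
      have hsplit3 : (∑ c : Fin (n+3), if e ∈ treePathEdges G hG (J c)
            (J (finRotate (n+3) c)) then (1:ℕ) else 0)
          = ((∑ d : Fin (n+1), if e ∈ treePathEdges G hG (j₁ d.castSucc)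
              (j₁ (d.castSucc + 1)) then (1:ℕ) else 0)
            + (if e ∈ treePathEdges G hG b (jh a) then 1 else 0))
            + (if e ∈ treePathEdges G hG b (jh (a+1)) then 1 else 0) := by
        rw [Fin.sum_univ_castSucc]
        congr 1
        · rw [Fin.sum_univ_castSucc]
          congr 1
          · apply Finset.sum_congr rfl
            intro d _
            rw [finRotate_succ_apply, hJcast,
              hcs d.castSucc (Fin.castSucc_lt_last d).ne, hJcast]
          · rw [finRotate_succ_apply, hJcast]
            have hlast1 : (Fin.castSucc (Fin.last (n+1)) : Fin (n+3)) + 1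
                = Fin.last (n+2) := by
              rw [Fin.coeSucc_eq_succ, Fin.succ_last]
            rw [hlast1, hJlast, hj₁last, treePathEdges_symm hG (jh a) b]
        · rw [finRotate_succ_apply, Fin.last_add_one, hJlast,
            show (0 : Fin (n+3)) = (0 : Fin (n+2)).castSucc from (Fin.castSucc_zero).symm,
            hJcast, hj₁0]
      have hsplit1 : (∑ c : Fin (n+2), if e ∈ treePathEdges G hG (j₁ c)
            (j₁ (finRotate (n+2) c)) then (1:ℕ) else 0)
          = (∑ d : Fin (n+1), if e ∈ treePathEdges G hG (j₁ d.castSucc)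
              (j₁ (d.castSucc + 1)) then (1:ℕ) else 0)
            + (if e ∈ treePathEdges G hG (jh a) (jh (a+1)) then 1 else 0) := by
        rw [Fin.sum_univ_castSucc]
        congr 1
        · apply Finset.sum_congr rfl
          intro d _
          rw [finRotate_succ_apply]
        · rw [finRotate_succ_apply, Fin.last_add_one, hj₁last, hj₁0]
      rw [hsplit3]
      have hjha : jh a ∈ A₀ := himjh ▸ Finset.mem_image_of_mem jh (Finset.mem_univ a)
      have hjha1 : jh (a+1) ∈ A₀ :=
        himjh ▸ Finset.mem_image_of_mem jh (Finset.mem_univ (a+1))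
      by_cases he₀ : e ∈ hullEdges G hG A₀
      · have h2 := hcount1 e he₀
        rw [hsplit1] at h2
        have hseam := ha e he₀
        have hxor := cocycle hG (jh a) (jh (a+1)) b e
        rw [treePathEdges_symm hG (jh a) b, treePathEdges_symm hG (jh (a+1)) b] at hxor
        by_cases hp : e ∈ treePathEdges G hG b (jh a) <;>
          by_cases hq : e ∈ treePathEdges G hG b (jh (a+1))
        · exact absurd ⟨hp, hq⟩ hseam
        · have hr : e ∈ treePathEdges G hG (jh a) (jh (a+1)) :=
            hxor.mpr (fun hiff => hq (hiff.mp hp))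
          simp only [hr, if_true] at h2
          simp only [hp, hq, if_true, if_false]
          omega
        · have hr : e ∈ treePathEdges G hG (jh a) (jh (a+1)) :=
            hxor.mpr (fun hiff => hp (hiff.mpr hq))
          simp only [hr, if_true] at h2
          simp only [hp, hq, if_true, if_false]
          omega
        · have hr : e ∉ treePathEdges G hG (jh a) (jh (a+1)) :=
            fun hin => (hxor.mp hin) (iff_of_false hp hq)
          simp only [hr, if_false] at h2
          simp only [hp, hq, if_true, if_false]
          omega
      · -- e not in the old hull
        have hS0 : (∑ d : Fin (n+1), if e ∈ treePathEdges G hG (j₁ d.castSucc)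
              (j₁ (d.castSucc + 1)) then (1:ℕ) else 0) = 0 := by
          apply Finset.sum_eq_zero
          intro d _
          exact if_neg (fun hin => he₀ (treePathEdges_subset_hullEdges hG
            (himj₁ ▸ Finset.mem_image_of_mem j₁ (Finset.mem_univ d.castSucc))
            (himj₁ ▸ Finset.mem_image_of_mem j₁ (Finset.mem_univ (d.castSucc + 1))) hin))
        rw [hA'] at he
        obtain ⟨u, hu, v, hv, hpe⟩ := (mem_hullEdges hG).mp he
        rw [Finset.mem_insert] at hu hv
        have hbv : ∃ v₀ ∈ A₀, e ∈ treePathEdges G hG b v₀ := by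
          rcases hu with rfl | hu₀ <;> rcases hv with rfl | hv₀
          · rw [treePathEdges_self] at hpe
            exact absurd hpe (Finset.notMem_empty e)
          · exact ⟨v, hv₀, hpe⟩
          · exact ⟨u, hu₀, by rw [treePathEdges_symm]; exact hpe⟩
          · exact absurd (treePathEdges_subset_hullEdges hG hu₀ hv₀ hpe) he₀
        obtain ⟨v₀, hv₀, hbv₀⟩ := hbv
        have hallw : ∀ w ∈ A₀, e ∈ treePathEdges G hG b w := by
          intro w hw
          have hnvw : e ∉ treePathEdges G hG v₀ w := fun hin =>
            he₀ (treePathEdges_subset_hullEdges hG hv₀ hw hin)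
          have hco := cocycle hG v₀ w b e
          rw [treePathEdges_symm hG v₀ b, treePathEdges_symm hG w b] at hco
          by_contra hnw
          exact hnvw (hco.mpr (fun hiff => hnw (hiff.mp hbv₀)))
        have hP1 := hallw _ hjha
        have hP2 := hallw _ hjha1
        rw [hS0]
        simp only [hP1, hP2, if_true]
    -- produce the permutation
    have hrange : Set.range J = Set.range j := by
      rw [← Set.image_univ, ← Set.image_univ, ← Finset.coe_univ,
        ← Finset.coe_image, ← Finset.coe_image, himJ]
    refine ⟨(Equiv.ofInjective J hJinj).trans
      ((Equiv.setCongr hrange).trans (Equiv.ofInjective j hj).symm), ?_⟩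
    intro e he
    have hjs : ∀ c, j ((((Equiv.ofInjective J hJinj).trans
        ((Equiv.setCongr hrange).trans (Equiv.ofInjective j hj).symm))) c) = J c := by
      intro c
      simp only [Equiv.trans_apply]
      rw [Equiv.apply_ofInjective_symm hj]
      rfl
    simp only [hjs]
    exact hnew e he

end Aux

/-- For `m ≥ 2` distinct leaves of a weighted tree there exists an `m`-cycle `α` of the
symmetric group on `Fin m` such that twice the `m`-dissimilarity equals the sum of the
tree distances between consecutive leaves in the cyclic order determined by `α`. -/
theorem exists_cycle_sum_eq_two_mul_dissimilarity
    {V : Type*} [Fintype V] [DecidableEq V] (G : SimpleGraph V) (hG : G.IsTree)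
    (ℓ : Sym2 V → ℝ) (hℓ : ∀ e ∈ G.edgeSet, 0 ≤ ℓ e)
    (m : ℕ) (hm : 2 ≤ m) (i : Fin m → V)
    (hinj : Function.Injective i) (hleaf : ∀ a, IsLeaf G (i a)) :
    ∃ α : Equiv.Perm (Fin m), α.IsCycle ∧ α.support = Finset.univ ∧
      2 * dissim G hG ℓ (Finset.univ.image i) =
        ∑ a : Fin m, treeDist G hG ℓ (i a) (i (α a)) := by
  obtain ⟨n, rfl⟩ : ∃ n, m = n + 2 := ⟨m - 2, by omega⟩
  obtain ⟨σ, hσ⟩ := aux_counts hG n i hinj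
  refine ⟨σ * finRotate (n+2) * σ⁻¹, Equiv.Perm.IsCycle.conj isCycle_finRotate, ?_, ?_⟩
  · rw [Equiv.Perm.support_conj, support_finRotate, Finset.map_univ_equiv]
  · have hvals : ∀ c, (σ * finRotate (n+2) * σ⁻¹) (σ c) = σ (finRotate (n+2) c) := by
      intro c
      simp [Equiv.Perm.mul_apply]
    have hstep1 : (∑ a : Fin (n+2), treeDist G hG ℓ (i a)
          (i ((σ * finRotate (n+2) * σ⁻¹) a)))
        = ∑ c : Fin (n+2), treeDist G hG ℓ (i (σ c)) (i (σ (finRotate (n+2) c))) := by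
      rw [← Equiv.sum_comp σ (fun a => treeDist G hG ℓ (i a)
        (i ((σ * finRotate (n+2) * σ⁻¹) a)))]
      apply Finset.sum_congr rfl
      intro c _
      rw [hvals c]
    rw [hstep1]
    symm
    have hmemA : ∀ c : Fin (n+2), i (σ c) ∈ Finset.univ.image i := fun c =>
      Finset.mem_image_of_mem i (Finset.mem_univ _)
    have hsub : ∀ c : Fin (n+2), treePathEdges G hG (i (σ c)) (i (σ (finRotate (n+2) c)))
        ⊆ hullEdges G hG (Finset.univ.image i) := fun c =>
      treePathEdges_subset_hullEdges hG (hmemA c) (hmemA _)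
    have hstep2 : ∀ c : Fin (n+2), treeDist G hG ℓ (i (σ c)) (i (σ (finRotate (n+2) c)))
        = ∑ e ∈ hullEdges G hG (Finset.univ.image i),
            if e ∈ treePathEdges G hG (i (σ c)) (i (σ (finRotate (n+2) c)))
              then ℓ e else 0 := by
      intro c
      rw [treeDist, ← Finset.sum_filter, Finset.filter_mem_eq_inter,
        Finset.inter_eq_right.mpr (hsub c)]
    calc (∑ c : Fin (n+2), treeDist G hG ℓ (i (σ c)) (i (σ (finRotate (n+2) c))))
        = ∑ c : Fin (n+2), ∑ e ∈ hullEdges G hG (Finset.univ.image i),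
            (if e ∈ treePathEdges G hG (i (σ c)) (i (σ (finRotate (n+2) c)))
              then ℓ e else 0) := by
          exact Finset.sum_congr rfl (fun c _ => hstep2 c)
      _ = ∑ e ∈ hullEdges G hG (Finset.univ.image i), ∑ c : Fin (n+2),
            (if e ∈ treePathEdges G hG (i (σ c)) (i (σ (finRotate (n+2) c)))
              then ℓ e else 0) := Finset.sum_comm
      _ = ∑ e ∈ hullEdges G hG (Finset.univ.image i), 2 * ℓ e := by
          apply Finset.sum_congr rfl
          intro e he
          have h2 := hσ e he
          have hmul : (∑ c : Fin (n+2),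
              if e ∈ treePathEdges G hG (i (σ c)) (i (σ (finRotate (n+2) c)))
                then ℓ e else 0)
              = (∑ c : Fin (n+2),
                  if e ∈ treePathEdges G hG (i (σ c)) (i (σ (finRotate (n+2) c)))
                    then (1:ℝ) else 0) * ℓ e := by
            rw [Finset.sum_mul]
            apply Finset.sum_congr rfl
            intro c _
            rw [ite_mul, one_mul, zero_mul]
          rw [hmul]
          have hcast : (∑ c : Fin (n+2),
              if e ∈ treePathEdges G hG (i (σ c)) (i (σ (finRotate (n+2) c)))
                then (1:ℝ) else 0)
              = ((∑ c : Fin (n+2),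
                  if e ∈ treePathEdges G hG (i (σ c)) (i (σ (finRotate (n+2) c)))
                    then (1:ℕ) else 0 : ℕ) : ℝ) := by
            push_cast
            rfl
          rw [hcast, h2]
          norm_num
      _ = 2 * dissim G hG ℓ (Finset.univ.image i) := by
          rw [dissim, Finset.mul_sum]
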